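/- arXiv:2102.00685 — 4 statements merged into one kernel-verified Lean document; each statement's English description precedes it below -/
import Mathlib

section
/- Let S be a densely defined, closed symmetric operator with S ≥ εI, ε > 0. Then the operator S_K defined on dom(S) ∔ ker(S*) by S_K f = S* f is a symmetric extension of S. -/
open scoped LinearPMap InnerProductSpace

/-- Let `S` be a densely defined, closed symmetric operator with `S ≥ ε I`, `ε > 0`.  Then
the operator `S_K` defined on `dom(S) ∔ ker(S*)` by `S_K f = S* f` is a symmetric
extension of `S`. -/
theorem krein_is_symmetric_extension
    {H : Type*} [NormedAddCommGroup H] [InnerProductSpace ℂ H] [CompleteSpace H]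
    [TopologicalSpace.SeparableSpace H]
    (S : H →ₗ.[ℂ] H) (hdense : Dense (S.domain : Set H)) (hclosed : S.IsClosed)
    (hsym : ∀ u v : S.domain, ⟪(u : H), S v⟫_ℂ = ⟪(S u : H), (v : H)⟫_ℂ)
    (ε : ℝ) (hε : 0 < ε)
    (hpos : ∀ u : S.domain, ε * ‖(u : H)‖ ^ 2 ≤ (⟪(u : H), S u⟫_ℂ).re)
    -- `N = ker(S*)` as a submodule of `H`
    (N : Submodule ℂ H)
    (hN : ∀ x : H, x ∈ N ↔ ∃ hx : x ∈ S.adjoint.domain, S.adjoint ⟨x, hx⟩ = 0)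
    -- `S_K` is the restriction of `S*` to `dom(S) ∔ ker(S*)`
    (SK : H →ₗ.[ℂ] H) (hSKdom : SK.domain = S.domain ⊔ N) (hSKres : SK ≤ S.adjoint) :
    S ≤ SK ∧ ∀ f g : SK.domain, ⟪(f : H), SK g⟫_ℂ = ⟪(SK f : H), (g : H)⟫_ℂ := by
  -- `S` is formally self-adjoint
  have hformal : S.IsFormalAdjoint S := fun x y => (hsym x y).symm
  -- hence `S ≤ S†`
  have hle : S ≤ S.adjoint := hformal.le_adjoint hdense
  -- the fundamental adjoint identity
  have hadj : S.adjoint.IsFormalAdjoint S := S.adjoint_isFormalAdjoint hdense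
  -- the value of `SK` equals the value of `S†`
  have hSKval : ∀ (f : SK.domain) (hf : (f : H) ∈ S.adjoint.domain),
      SK f = S.adjoint ⟨f, hf⟩ := fun f hf => hSKres.2 rfl
  -- `S† v = 0` for `v ∈ N`
  have hNzero : ∀ (v : H) (hv : v ∈ N), ∃ hv' : v ∈ S.adjoint.domain,
      S.adjoint ⟨v, hv'⟩ = 0 := fun v hv => (hN v).mp hv
  -- `S†` of anything in `SK.domain` equals `S` of its `dom S` part
  have key : ∀ f : SK.domain, ∃ (u : S.domain) (v : H) (hv : v ∈ N),
      (u : H) + v = (f : H) ∧ SK f = S u := by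
    intro f
    have hf : (f : H) ∈ S.domain ⊔ N := hSKdom ▸ f.2
    obtain ⟨u, hu, v, hv, huv⟩ := Submodule.mem_sup.mp hf
    refine ⟨⟨u, hu⟩, v, hv, huv, ?_⟩
    obtain ⟨hv', hv0⟩ := hNzero v hv
    have hfdom : (f : H) ∈ S.adjoint.domain := hSKres.1 f.2
    have hudom : u ∈ S.adjoint.domain := hle.1 hu
    have hsplit : (⟨(f : H), hfdom⟩ : S.adjoint.domain) = ⟨u, hudom⟩ + ⟨v, hv'⟩ := by
      ext; exact huv.symm
    have hSu : S.adjoint ⟨u, hudom⟩ = S ⟨u, hu⟩ := (hle.2 (x := ⟨u, hu⟩) rfl).symm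
    rw [hSKval f hfdom, hsplit, S.adjoint.map_add, hSu, hv0, add_zero]
  -- orthogonality: `⟪v, S u⟫ = 0` for `v ∈ N`, `u ∈ dom S`
  have horth : ∀ (v : H) (hv : v ∈ N) (u : S.domain), ⟪v, (S u : H)⟫_ℂ = 0 := by
    intro v hv u
    obtain ⟨hv', hv0⟩ := hNzero v hv
    have := hadj ⟨v, hv'⟩ u
    rw [hv0] at this
    simpa using this.symm
  constructor
  · -- `S ≤ SK`
    refine ⟨fun x hx => hSKdom ▸ Submodule.mem_sup_left hx, fun x y hxy => ?_⟩
    obtain ⟨u, v, hv, huv, hval⟩ := key y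
    -- Since decomposition may not be unique a priori? Use: SK y = S† y = S† x = S x.
    have hxdom : (x : H) ∈ S.adjoint.domain := hle.1 x.2
    have hydom : (y : H) ∈ S.adjoint.domain := hSKres.1 y.2
    have h1 : S x = S.adjoint ⟨(x : H), hxdom⟩ := hle.2 rfl
    have h2 : SK y = S.adjoint ⟨(y : H), hydom⟩ := hSKval y hydom
    rw [h1, h2]
    congr 1
    ext
    exact hxy
  · intro f g
    obtain ⟨u, v, hv, huv, hval⟩ := key f
    obtain ⟨u', v', hv', huv', hval'⟩ := key g
    rw [hval, hval', ← huv, ← huv']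
    rw [inner_add_left, inner_add_right, horth v hv u', hsym u u']
    have : ⟪(S u : H), v'⟫_ℂ = 0 := by
      rw [← inner_conj_symm, horth v' hv' u, map_zero]
    rw [this]
end

section
/- Let α, β ∈ ℝ, r(x) = r₀(x)x^β with 0 < m ≤ r₀(x) ≤ M on (0,b), and p(x) = p₀(x)x^α with 0 < m ≤ p₀(x) ≤ M. Then both y₁(x) = 1 and y₂(x) = ∫_x^b p₀(t)⁻¹t^{−α} dt belong to L²((0,b); r(x)dx) if and only if β > max{−1, 2α−3}. -/
open Set MeasureTheory intervalIntegral

/-- Acoustic black hole limit circle criterion at `x = 0`: with `p(x) = p₀(x) x^α`,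
`r(x) = r₀(x) x^β`, `0 < m ≤ p₀, r₀ ≤ M`, both `y₁ = 1` and
`y₂(x) = ∫_x^b p₀(t)⁻¹ t^{−α} dt` belong to `L²((0,b); r dx)` if and only if
`β > max{−1, 2α−3}`. -/
theorem acoustic_black_hole_limit_circle_iff
    (α β b m M : ℝ) (hb : 0 < b) (hm : 0 < m) (hmM : m ≤ M)
    (p₀ r₀ : ℝ → ℝ) (hpcont : ContinuousOn p₀ (Ioc 0 b)) (hrcont : ContinuousOn r₀ (Ioo 0 b))
    (hplow : ∀ x ∈ Ioc 0 b, m ≤ p₀ x) (hpup : ∀ x ∈ Ioc 0 b, p₀ x ≤ M)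
    (hrlow : ∀ x ∈ Ioo 0 b, m ≤ r₀ x) (hrup : ∀ x ∈ Ioo 0 b, r₀ x ≤ M) :
    (IntegrableOn (fun x => (1 : ℝ) ^ 2 * (r₀ x * x ^ β)) (Ioo 0 b) ∧
     IntegrableOn
       (fun x => (∫ t in x..b, 1 / (p₀ t * t ^ α)) ^ 2 * (r₀ x * x ^ β)) (Ioo 0 b))
    ↔ max (-1) (2 * α - 3) < β := by
  have hM : 0 < M := hm.trans_le hmM
  set f : ℝ → ℝ := fun t => 1 / (p₀ t * t ^ α) with hf_def
  set Y : ℝ → ℝ := fun x => ∫ t in x..b, f t with hY_def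
  -- positivity of p₀ t * t^α
  have hden_pos : ∀ t ∈ Ioc (0:ℝ) b, 0 < p₀ t * t ^ α := fun t ht =>
    mul_pos (hm.trans_le (hplow t ht)) (Real.rpow_pos_of_pos ht.1 α)
  have hf_pos : ∀ t ∈ Ioc (0:ℝ) b, 0 < f t := fun t ht => by
    simp only [hf_def]; exact div_pos one_pos (hden_pos t ht)
  -- continuity of f
  have hf_cont : ContinuousOn f (Ioc 0 b) := by
    apply ContinuousOn.div continuousOn_const
    · exact hpcont.mul (fun t ht =>
        (Real.continuousAt_rpow_const t α (Or.inl ht.1.ne')).continuousWithinAt)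
    · exact fun t ht => (hden_pos t ht).ne'
  -- interval integrability of f on [x, b] for 0 < x
  have hf_int : ∀ x ∈ Ioo (0:ℝ) b, IntervalIntegrable f volume x b := by
    intro x hx
    apply ContinuousOn.intervalIntegrable
    rw [uIcc_of_le hx.2.le]
    exact hf_cont.mono (fun t ht => ⟨hx.1.trans_le ht.1, ht.2⟩)
  -- nonnegativity of Y
  have hY_nonneg : ∀ x ∈ Ioo (0:ℝ) b, 0 ≤ Y x := by
    intro x hx
    apply intervalIntegral.integral_nonneg hx.2.le
    exact fun u hu => (hf_pos u ⟨hx.1.trans_le hu.1, hu.2⟩).le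
  -- continuity of Y on Ioo 0 b
  have hY_cont : ContinuousOn Y (Ioo 0 b) := by
    intro x hx
    have hx2 : 0 < x / 2 := by linarith [hx.1]
    have hxle : x / 2 ≤ b := by linarith [hx.1, hx.2]
    have hint : IntegrableOn f (uIcc (x / 2) b) volume := by
      rw [uIcc_of_le hxle]
      exact (hf_cont.mono (fun t ht => ⟨hx2.trans_le ht.1, ht.2⟩)).integrableOn_Icc
    have key := continuousOn_primitive_interval_left hint
    rw [uIcc_of_le hxle] at key
    exact (key.continuousAt (Icc_mem_nhds (by linarith [hx.1]) hx.2)).continuousWithinAt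
  -- continuity of x ^ s on positive sets
  have hrpow_cont : ∀ (s u : ℝ), ContinuousOn (fun x : ℝ => x ^ s) (Ioo 0 u) := fun s u x hx =>
    (Real.continuousAt_rpow_const x s (Or.inl hx.1.ne')).continuousWithinAt
  rw [max_lt_iff]
  constructor
  · rintro ⟨h1, h2⟩
    have hβ1 : -1 < β := by
      have hint : IntegrableOn (fun x : ℝ => x ^ β) (Ioo 0 b) := by
        refine Integrable.mono' (h1.const_mul m⁻¹)
          ((hrpow_cont β b).aestronglyMeasurable measurableSet_Ioo) ?_
        filter_upwards [ae_restrict_mem measurableSet_Ioo] with x hx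
        have hxβ : (0:ℝ) < x ^ β := Real.rpow_pos_of_pos hx.1 β
        rw [Real.norm_of_nonneg hxβ.le, one_pow, one_mul, le_inv_mul_iff₀ hm]
        exact mul_le_mul_of_nonneg_right (hrlow x hx) hxβ.le
      exact (integrableOn_Ioo_rpow_iff hb).1 hint
    refine ⟨hβ1, ?_⟩
    rcases le_or_gt α 1 with hα | hα
    · linarith
    -- α > 1 : use the lower bound on Y near 0
    have hD : (0:ℝ) < α - 1 := by linarith
    obtain ⟨c, hc_pos, hc_lt, hckey⟩ :
        ∃ c : ℝ, 0 < c ∧ c < b ∧ ∀ x ∈ Ioo (0:ℝ) c, b ^ (1-α) ≤ x ^ (1-α) / 2 := by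
      have h2pos : (0:ℝ) < (2:ℝ) ^ ((1:ℝ) / (1 - α)) := Real.rpow_pos_of_pos two_pos _
      have h1α : (1:ℝ) - α ≠ 0 := by intro h; apply hα.ne'; linarith
      refine ⟨b * (2:ℝ) ^ ((1:ℝ) / (1 - α)), mul_pos hb h2pos, ?_, ?_⟩
      · have h1' : (2:ℝ) ^ ((1:ℝ) / (1 - α)) < 1 :=
          Real.rpow_lt_one_of_one_lt_of_neg one_lt_two
            (div_neg_of_pos_of_neg one_pos (by linarith))
        calc b * (2:ℝ) ^ ((1:ℝ) / (1 - α)) < b * 1 := mul_lt_mul_of_pos_left h1' hb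
          _ = b := mul_one b
      · intro x hx
        have hc_rpow : (b * (2:ℝ) ^ ((1:ℝ) / (1 - α))) ^ (1 - α) = 2 * b ^ (1 - α) := by
          rw [Real.mul_rpow hb.le h2pos.le,
            ← Real.rpow_mul (by norm_num : (0:ℝ) ≤ 2), one_div_mul_cancel h1α,
            Real.rpow_one]
          ring
        have hxc : (b * (2:ℝ) ^ ((1:ℝ) / (1 - α))) ^ (1 - α) ≤ x ^ (1 - α) :=
          Real.rpow_le_rpow_of_nonpos hx.1 hx.2.le (by linarith)
        rw [hc_rpow] at hxc; linarith
    obtain ⟨c₁, hc₁, hYlow⟩ :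
        ∃ c₁ : ℝ, 0 < c₁ ∧ ∀ x ∈ Ioo (0:ℝ) c, c₁ * x ^ (1 - α) ≤ Y x := by
      refine ⟨(2 * M * (α - 1))⁻¹, by positivity, ?_⟩
      intro x hx
      have hx_b : x ∈ Ioo (0:ℝ) b := ⟨hx.1, hx.2.trans hc_lt⟩
      have h0nm : (0:ℝ) ∉ uIcc x b := by
        rw [uIcc_of_le hx_b.2.le]
        exact fun h => absurd h.1 (not_le.2 hx.1)
      have hint1 : IntervalIntegrable (fun t : ℝ => M⁻¹ * t ^ (-α)) volume x b :=
        (intervalIntegrable_rpow (Or.inr h0nm)).const_mul M⁻¹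
      have hle : ∀ t ∈ Icc x b, M⁻¹ * t ^ (-α) ≤ f t := by
        intro t ht
        have ht' : t ∈ Ioc (0:ℝ) b := ⟨hx.1.trans_le ht.1, ht.2⟩
        have hta : (0:ℝ) < t ^ α := Real.rpow_pos_of_pos ht'.1 α
        rw [Real.rpow_neg ht'.1.le, hf_def]
        simp only [one_div, ← mul_inv]
        exact inv_anti₀ (hden_pos t ht')
          (mul_le_mul_of_nonneg_right (hpup t ht') hta.le)
      have hmono := intervalIntegral.integral_mono_on hx_b.2.le hint1 (hf_int x hx_b) hle
      have hne : (-α : ℝ) ≠ -1 := by intro h; apply hα.ne'; linarith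
      rw [intervalIntegral.integral_const_mul,
        integral_rpow (Or.inr ⟨hne, h0nm⟩)] at hmono
      have heq : -α + 1 = 1 - α := by ring
      rw [heq] at hmono
      have hbx := hckey x hx
      have hxpos : (0:ℝ) < x ^ (1 - α) := Real.rpow_pos_of_pos hx.1 _
      have hMne : M ≠ 0 := hM.ne'
      have hDne : α - 1 ≠ 0 := hD.ne'
      have h1αne : (1:ℝ) - α ≠ 0 := by intro h; apply hα.ne'; linarith
      have h1 : (b ^ (1-α) - x ^ (1-α)) / (1 - α)
          = (x ^ (1-α) - b ^ (1-α)) / (α - 1) := by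
        rw [div_eq_div_iff h1αne hDne]; ring
      have h2 : M⁻¹ * ((x ^ (1-α) - b ^ (1-α)) / (α - 1))
          - (2 * M * (α - 1))⁻¹ * x ^ (1-α)
          = M⁻¹ * ((x ^ (1-α) / 2 - b ^ (1-α)) / (α - 1)) := by
        field_simp
        ring
      have h3 : (0:ℝ) ≤ M⁻¹ * ((x ^ (1-α) / 2 - b ^ (1-α)) / (α - 1)) := by
        apply mul_nonneg (inv_nonneg.2 hM.le)
        exact div_nonneg (by linarith) hD.le
      rw [h1] at hmono
      linarith
    -- deduce integrability of x ^ (2 - 2α + β) on Ioo 0 c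
    have hC₀ : (0:ℝ) < c₁ ^ 2 * m := by positivity
    have hint : IntegrableOn (fun x : ℝ => x ^ (2 - 2*α + β)) (Ioo 0 c) := by
      refine Integrable.mono'
        ((h2.mono_set (Ioo_subset_Ioo_right hc_lt.le)).const_mul (c₁ ^ 2 * m)⁻¹)
        ((hrpow_cont (2 - 2*α + β) c).aestronglyMeasurable measurableSet_Ioo) ?_
      filter_upwards [ae_restrict_mem measurableSet_Ioo] with x hx
      have hx_b : x ∈ Ioo (0:ℝ) b := ⟨hx.1, hx.2.trans hc_lt⟩
      have hxpos : (0:ℝ) < x ^ (2 - 2*α + β) := Real.rpow_pos_of_pos hx.1 _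
      rw [Real.norm_of_nonneg hxpos.le, le_inv_mul_iff₀ hC₀]
      have hsq : (c₁ * x ^ (1-α)) ^ 2 ≤ Y x ^ 2 := by
        apply pow_le_pow_left₀
          (mul_nonneg hc₁.le (Real.rpow_pos_of_pos hx.1 _).le) (hYlow x hx)
      have hr : m * x ^ β ≤ r₀ x * x ^ β :=
        mul_le_mul_of_nonneg_right (hrlow x hx_b) (Real.rpow_pos_of_pos hx.1 β).le
      calc c₁ ^ 2 * m * x ^ (2 - 2*α + β)
          = (c₁ * x ^ (1-α)) ^ 2 * (m * x ^ β) := by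
            rw [show (2 - 2*α + β) = ((1-α) + (1-α)) + β by ring,
              Real.rpow_add hx.1, Real.rpow_add hx.1]
            ring
        _ ≤ Y x ^ 2 * (r₀ x * x ^ β) :=
            mul_le_mul hsq hr
              (mul_nonneg hm.le (Real.rpow_pos_of_pos hx.1 β).le) (sq_nonneg _)
    have := (integrableOn_Ioo_rpow_iff hc_pos).1 hint
    linarith
  · rintro ⟨hβ1, hβ2⟩
    have hxβ_int : IntegrableOn (fun x : ℝ => x ^ β) (Ioo 0 b) :=
      (integrableOn_Ioo_rpow_iff hb).2 hβ1
    have hr_meas : AEStronglyMeasurable (fun x => r₀ x * x ^ β) (volume.restrict (Ioo 0 b)) :=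
      (hrcont.mul (hrpow_cont β b)).aestronglyMeasurable measurableSet_Ioo
    have h1 : IntegrableOn (fun x => (1:ℝ) ^ 2 * (r₀ x * x ^ β)) (Ioo 0 b) := by
      simp only [one_pow, one_mul]
      refine Integrable.mono' (hxβ_int.const_mul M) hr_meas ?_
      filter_upwards [ae_restrict_mem measurableSet_Ioo] with x hx
      have hxβ : (0:ℝ) < x ^ β := Real.rpow_pos_of_pos hx.1 β
      rw [Real.norm_of_nonneg (mul_nonneg ((hm.trans_le (hrlow x hx)).le) hxβ.le)]
      exact mul_le_mul_of_nonneg_right (hrup x hx) hxβ.le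
    refine ⟨h1, ?_⟩
    -- choose γ with α < γ, 1 < γ, and 2 - 2γ + β > -1
    obtain ⟨γ, hγα, hγ1, hexp⟩ : ∃ γ : ℝ, α < γ ∧ 1 < γ ∧ -1 < 2 - 2*γ + β := by
      have hD : max (-1) (2*α - 3) < β := max_lt_iff.2 ⟨hβ1, hβ2⟩
      have hε : 0 < (β - max (-1) (2*α - 3)) / 4 := by linarith
      refine ⟨max α 1 + (β - max (-1) (2*α - 3)) / 4,
        lt_of_le_of_lt (le_max_left α 1) (lt_add_of_pos_right _ hε),
        lt_of_le_of_lt (le_max_right α 1) (lt_add_of_pos_right _ hε), ?_⟩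
      have hDmax : 2 * max α 1 - 3 = max (-1) (2*α - 3) := by
        rcases le_total α 1 with h | h
        · rw [max_eq_right h, max_eq_left (by linarith)]; norm_num
        · rw [max_eq_left h, max_eq_right (by linarith)]
      linarith
    -- uniform upper bound on Y
    obtain ⟨C, hC0, hYup⟩ :
        ∃ C : ℝ, 0 < C ∧ ∀ x ∈ Ioo (0:ℝ) b, Y x ≤ C * x ^ (1 - γ) := by
      obtain ⟨K, hK0, hfK⟩ : ∃ K : ℝ, 0 < K ∧ ∀ t ∈ Ioc (0:ℝ) b, f t ≤ K * t ^ (-γ) := by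
        refine ⟨m⁻¹ * (max b 1) ^ (γ - α),
          mul_pos (inv_pos.2 hm)
            (Real.rpow_pos_of_pos (lt_of_lt_of_le hb (le_max_left b 1)) _), ?_⟩
        intro t ht
        have ht0 : (0:ℝ) < t := ht.1
        have htγ : (0:ℝ) < t ^ (-γ) := Real.rpow_pos_of_pos ht0 _
        have h1' : f t ≤ m⁻¹ * t ^ (-α) := by
          have hta : (0:ℝ) < t ^ α := Real.rpow_pos_of_pos ht0 α
          rw [Real.rpow_neg ht0.le, hf_def]
          simp only [one_div, ← mul_inv]
          exact inv_anti₀ (by positivity)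
            (mul_le_mul_of_nonneg_right (hplow t ht) hta.le)
        have h2' : t ^ (-α) ≤ (max b 1) ^ (γ - α) * t ^ (-γ) := by
          have heq : t ^ (-α : ℝ) = t ^ (γ - α) * t ^ (-γ) := by
            rw [← Real.rpow_add ht0]; ring_nf
          rw [heq]
          refine mul_le_mul_of_nonneg_right ?_ htγ.le
          exact Real.rpow_le_rpow ht0.le (ht.2.trans (le_max_left b 1)) (by linarith)
        calc f t ≤ m⁻¹ * t ^ (-α) := h1'
          _ ≤ m⁻¹ * ((max b 1) ^ (γ - α) * t ^ (-γ)) :=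
              mul_le_mul_of_nonneg_left h2' (inv_nonneg.2 hm.le)
          _ = m⁻¹ * (max b 1) ^ (γ - α) * t ^ (-γ) := by ring
      refine ⟨K / (γ - 1), div_pos hK0 (by linarith), ?_⟩
      intro x hx
      have h0nm : (0:ℝ) ∉ uIcc x b := by
        rw [uIcc_of_le hx.2.le]
        exact fun h => absurd h.1 (not_le.2 hx.1)
      have hint2 : IntervalIntegrable (fun t : ℝ => K * t ^ (-γ)) volume x b :=
        (intervalIntegrable_rpow (Or.inr h0nm)).const_mul K
      have hmono := intervalIntegral.integral_mono_on hx.2.le (hf_int x hx) hint2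
        (fun t ht => hfK t ⟨hx.1.trans_le ht.1, ht.2⟩)
      have hne : (-γ : ℝ) ≠ -1 := by intro h; apply hγ1.ne'; linarith
      rw [intervalIntegral.integral_const_mul,
        integral_rpow (Or.inr ⟨hne, h0nm⟩)] at hmono
      have heq : -γ + 1 = 1 - γ := by ring
      rw [heq] at hmono
      have hbpos : (0:ℝ) < b ^ (1 - γ) := Real.rpow_pos_of_pos hb _
      have hxpos : (0:ℝ) < x ^ (1 - γ) := Real.rpow_pos_of_pos hx.1 _
      have h1 : (b ^ (1-γ) - x ^ (1-γ)) / (1 - γ)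
          = (x ^ (1-γ) - b ^ (1-γ)) / (γ - 1) := by
        rw [div_eq_div_iff (by intro h; apply hγ1.ne'; linarith)
          (by intro h; apply hγ1.ne'; linarith)]
        ring
      have h2 : (0:ℝ) ≤ K * b ^ (1-γ) / (γ - 1) :=
        div_nonneg (mul_pos hK0 hbpos).le (by linarith)
      calc Y x ≤ K * ((x ^ (1-γ) - b ^ (1-γ)) / (γ - 1)) := by rw [← h1]; exact hmono
        _ = K / (γ - 1) * x ^ (1-γ) - K * b ^ (1-γ) / (γ - 1) := by ring
        _ ≤ K / (γ - 1) * x ^ (1-γ) := by linarith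
    -- conclude integrability of the second function
    refine Integrable.mono'
      (((integrableOn_Ioo_rpow_iff hb).2 hexp).const_mul (C ^ 2 * M))
      (((hY_cont.pow 2).mul (hrcont.mul (hrpow_cont β b))).aestronglyMeasurable
        measurableSet_Ioo) ?_
    filter_upwards [ae_restrict_mem measurableSet_Ioo] with x hx
    have hYx := hY_nonneg x hx
    have hYu := hYup x hx
    have hxβ : (0:ℝ) < x ^ β := Real.rpow_pos_of_pos hx.1 β
    have hr0 : (0:ℝ) ≤ r₀ x := (hm.trans_le (hrlow x hx)).le
    rw [Real.norm_of_nonneg (mul_nonneg (sq_nonneg _) (mul_nonneg hr0 hxβ.le))]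
    calc Y x ^ 2 * (r₀ x * x ^ β) ≤ (C * x ^ (1-γ)) ^ 2 * (M * x ^ β) :=
          mul_le_mul (pow_le_pow_left₀ hYx hYu 2)
            (mul_le_mul_of_nonneg_right (hrup x hx) hxβ.le)
            (mul_nonneg hr0 hxβ.le) (sq_nonneg _)
      _ = C ^ 2 * M * x ^ (2 - 2*γ + β) := by
          rw [show (2 - 2*γ + β) = ((1-γ) + (1-γ)) + β by ring,
            Real.rpow_add hx.1, Real.rpow_add hx.1]
          ring
end

section
/- Let α, β ∈ ℝ and r(x) = (1−x)^α(1+x)^β on (−1,1). The function y₂(x) = ∫₀^x (1−t)^{−1−α}(1+t)^{−1−β} dt satisfies ∫_{−1}^0 |y₂(x)|² r(x) dx < ∞ if and only if β ∈ (−1,1). -/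
open Set MeasureTheory intervalIntegral

private lemma contOn_one_add (b : ℝ) {s : Set ℝ} (hs : ∀ t ∈ s, (0:ℝ) < 1 + t) :
    ContinuousOn (fun t : ℝ => (1 + t) ^ b) s := fun t ht =>
  (((continuous_const.add continuous_id).continuousAt).rpow_const
      (Or.inl (hs t ht).ne')).continuousWithinAt

private lemma contOn_one_sub (a : ℝ) {s : Set ℝ} (hs : ∀ t ∈ s, (0:ℝ) < 1 - t) :
    ContinuousOn (fun t : ℝ => (1 - t) ^ a) s := fun t ht =>
  (((continuous_const.sub continuous_id).continuousAt).rpow_const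
      (Or.inl (hs t ht).ne')).continuousWithinAt

private lemma intervalIntegrable_onIcc {g : ℝ → ℝ} {x y : ℝ} (hxy : x ≤ y)
    (h : ContinuousOn g (Icc x y)) : IntervalIntegrable g volume x y := by
  apply ContinuousOn.intervalIntegrable; rwa [uIcc_of_le hxy]

private lemma integrableOn_one_add_rpow_iff (s c : ℝ) (hc : -1 < c) :
    IntegrableOn (fun x : ℝ => (1 + x) ^ s) (Ioo (-1 : ℝ) c) ↔ -1 < s := by
  rw [← intervalIntegrable_iff_integrableOn_Ioo_of_le hc.le]
  constructor
  · intro h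
    have h2 := h.comp_sub_right 1
    have key : (fun x : ℝ => (1 + (x - 1)) ^ s) = fun x : ℝ => x ^ s := by
      funext x; norm_num
    rw [key] at h2
    norm_num at h2
    rw [intervalIntegrable_iff_integrableOn_Ioo_of_le (by linarith)] at h2
    exact (integrableOn_Ioo_rpow_iff (by linarith)).mp h2
  · intro hs
    have h := (intervalIntegrable_rpow' hs (a := 0) (b := c + 1)).comp_add_right 1
    have key : (fun x : ℝ => (x + 1) ^ s) = fun x : ℝ => (1 + x) ^ s := by
      funext x; rw [add_comm]
    rw [key] at h
    norm_num at h
    exact h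

private lemma integral_one_add_rpow (x γ : ℝ) (hx : -1 < x) (hγ : γ ≠ 0) :
    ∫ t in x..0, (1 + t) ^ (-1 - γ) = ((1 + x) ^ (-γ) - 1) / γ := by
  have h1 : ∫ t in x..0, (1 + t) ^ (-1 - γ)
      = ∫ u in (1 + x)..(1 + 0 : ℝ), u ^ (-1 - γ) :=
    integral_comp_add_left (fun u : ℝ => u ^ (-1 - γ)) 1
  have h0 : (0:ℝ) ∉ Set.uIcc (1 + x) (1 + 0 : ℝ) := by
    rw [Set.mem_uIcc]; push_neg
    constructor <;> intro h <;> [linarith; linarith]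
  rw [h1, integral_rpow (Or.inr ⟨by intro h; apply hγ; linarith, h0⟩)]
  have he : -1 - γ + 1 = -γ := by ring
  rw [he]
  norm_num
  rw [div_eq_div_iff (a := 1 - (1 + x) ^ (-γ)) (neg_ne_zero.mpr hγ) hγ]
  ring

private lemma rpow_le_max (e u : ℝ) (h1 : 1 ≤ u) (h2 : u ≤ 2) :
    u ^ e ≤ max 1 ((2:ℝ) ^ e) := by
  rcases le_or_gt 0 e with he | he
  · exact le_max_of_le_right (Real.rpow_le_rpow (by linarith) h2 he)
  · exact le_max_of_le_left (Real.rpow_le_one_of_one_le_of_nonpos h1 he.le)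

private lemma min_le_rpow (e u : ℝ) (h1 : 1 ≤ u) (h2 : u ≤ 2) :
    min 1 ((2:ℝ) ^ e) ≤ u ^ e := by
  rcases le_or_gt 0 e with he | he
  · exact le_trans (min_le_left _ _) (Real.one_le_rpow h1 he)
  · exact le_trans (min_le_right _ _) (Real.rpow_le_rpow_of_nonpos (by linarith) h2 he.le)

private lemma jacobi_f_contOn (α β : ℝ) {s : Set ℝ} (h1 : ∀ t ∈ s, (0:ℝ) < 1 - t)
    (h2 : ∀ t ∈ s, (0:ℝ) < 1 + t) :
    ContinuousOn (fun t : ℝ => (1 - t) ^ (-1 - α) * (1 + t) ^ (-1 - β)) s :=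
  (contOn_one_sub _ h1).mul (contOn_one_add _ h2)

private lemma jacobi_f_II (α β : ℝ) {x y : ℝ} (hx : -1 < x) (hxy : x ≤ y) (hy : y ≤ 0) :
    IntervalIntegrable (fun t : ℝ => (1 - t) ^ (-1 - α) * (1 + t) ^ (-1 - β)) volume x y :=
  intervalIntegrable_onIcc hxy (jacobi_f_contOn α β
    (fun t ht => by have := ht.2; have := ht.1; nlinarith [hy])
    (fun t ht => by have := ht.1; linarith))

private lemma one_add_II (c : ℝ) {x y : ℝ} (hx : -1 < x) (hxy : x ≤ y) :
    IntervalIntegrable (fun t : ℝ => (1 + t) ^ c) volume x y :=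
  intervalIntegrable_onIcc hxy (contOn_one_add _ (fun t ht => by have := ht.1; linarith))

private lemma jacobi_integral_nonneg (α β : ℝ) {x y : ℝ} (hx : -1 ≤ x) (hxy : x ≤ y)
    (hy : y ≤ 1) :
    0 ≤ ∫ t in x..y, (1 - t) ^ (-1 - α) * (1 + t) ^ (-1 - β) :=
  intervalIntegral.integral_nonneg hxy (fun u hu =>
    mul_nonneg (Real.rpow_nonneg (by have := hu.2; linarith) _)
      (Real.rpow_nonneg (by have := hu.1; linarith) _))

private lemma key_upper (α β γ : ℝ) (hγ : 0 < γ) (hβγ : β ≤ γ) {x : ℝ}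
    (hx : -1 < x) (hx0 : x ≤ 0) :
    (∫ t in x..0, (1 - t) ^ (-1 - α) * (1 + t) ^ (-1 - β))
      ≤ max 1 ((2:ℝ) ^ (-1 - α)) * (((1 + x) ^ (-γ) - 1) / γ) := by
  have hM0 : (0:ℝ) ≤ max 1 ((2:ℝ) ^ (-1 - α)) := le_trans zero_le_one (le_max_left _ _)
  have hmono := intervalIntegral.integral_mono_on (μ := volume) hx0
    (jacobi_f_II α β hx hx0 le_rfl)
    ((one_add_II (-1 - γ) hx hx0).const_mul (max 1 ((2:ℝ) ^ (-1 - α)))) ?_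
  · rw [intervalIntegral.integral_const_mul, integral_one_add_rpow x γ hx hγ.ne'] at hmono
    exact hmono
  · intro t ht
    have h1t : 0 < 1 + t := by have := ht.1; linarith
    have h2t : 1 + t ≤ 1 := by have := ht.2; linarith
    exact mul_le_mul (rpow_le_max _ _ (by have := ht.2; linarith) (by have := ht.1; linarith))
      (Real.rpow_le_rpow_of_exponent_ge h1t h2t (by linarith))
      (Real.rpow_nonneg h1t.le _) hM0

private lemma key_lower (α β : ℝ) (hβ : β ≠ 0) {x : ℝ} (hx : -1 < x) (hx0 : x ≤ 0) :
    min 1 ((2:ℝ) ^ (-1 - α)) * (((1 + x) ^ (-β) - 1) / β)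
      ≤ ∫ t in x..0, (1 - t) ^ (-1 - α) * (1 + t) ^ (-1 - β) := by
  have hmono := intervalIntegral.integral_mono_on (μ := volume) hx0
    ((one_add_II (-1 - β) hx hx0).const_mul (min 1 ((2:ℝ) ^ (-1 - α))))
    (jacobi_f_II α β hx hx0 le_rfl) ?_
  · rwa [intervalIntegral.integral_const_mul, integral_one_add_rpow x β hx hβ] at hmono
  · intro t ht
    have h1t : 0 < 1 + t := by have := ht.1; linarith
    exact mul_le_mul (min_le_rpow _ _ (by have := ht.2; linarith) (by have := ht.1; linarith))
      le_rfl (Real.rpow_nonneg h1t.le _) (Real.rpow_nonneg (by have := ht.2; linarith) _)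

private lemma y2_contOn (α β : ℝ) :
    ContinuousOn (fun x : ℝ => ∫ t in (0:ℝ)..x, (1 - t) ^ (-1 - α) * (1 + t) ^ (-1 - β))
      (Ioo (-1 : ℝ) 0) := by
  intro x₀ hx₀
  obtain ⟨hx₀1, hx₀2⟩ := hx₀
  set a := (x₀ - 1) / 2 with ha
  have ha1 : -1 < a := by rw [ha]; linarith
  have ha2 : a < x₀ := by rw [ha]; linarith
  have ha0 : a ≤ 0 := by linarith
  have hint : IntervalIntegrable
      (fun t : ℝ => (1 - t) ^ (-1 - α) * (1 + t) ^ (-1 - β)) volume a 0 :=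
    jacobi_f_II α β ha1 ha0 le_rfl
  have h0mem : (0:ℝ) ∈ Set.uIcc a (0:ℝ) := Set.right_mem_uIcc
  have hcont := intervalIntegral.continuousOn_primitive_interval' hint h0mem
  have hccc := hcont x₀ (by rw [Set.uIcc_of_le ha0]; exact ⟨ha2.le, hx₀2.le⟩)
  exact hccc.mono_of_mem_nhdsWithin (mem_nhdsWithin_of_mem_nhds
    (by rw [Set.uIcc_of_le ha0]; exact Icc_mem_nhds ha2 hx₀2))

/-- Jacobi limit circle criterion at the endpoint `−1`: with
`r(x) = (1−x)^α (1+x)^β` and `y₂(x) = ∫_0^x (1−t)^{−1−α}(1+t)^{−1−β} dt`, one has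
`∫_{−1}^0 |y₂|² r dx < ∞` if and only if `β ∈ (−1,1)`. -/
theorem jacobi_limit_circle_at_minus_one_iff
    (α β : ℝ) :
    IntegrableOn
      (fun x => (∫ t in (0 : ℝ)..x, (1 - t) ^ (-1 - α) * (1 + t) ^ (-1 - β)) ^ 2
        * ((1 - x) ^ α * (1 + x) ^ β)) (Ioo (-1 : ℝ) 0)
    ↔ β ∈ Ioo (-1 : ℝ) 1 := by
  constructor
  · intro h
    by_contra hβ
    rw [Set.mem_Ioo] at hβ
    push_neg at hβ
    set m' := min 1 ((2:ℝ) ^ α) with hm'def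
    have hm' : (0:ℝ) < m' := lt_min one_pos (Real.rpow_pos_of_pos two_pos α)
    set m := min 1 ((2:ℝ) ^ (-1 - α)) with hmdef
    have hm : (0:ℝ) < m := lt_min one_pos (Real.rpow_pos_of_pos two_pos _)
    rcases le_or_gt β (-1) with hle | hgt
    · -- β ≤ -1
      set K := ∫ t in (-1/2 : ℝ)..0, (1 - t) ^ (-1 - α) * (1 + t) ^ (-1 - β) with hKdef
      have hfi : IntervalIntegrable
          (fun t : ℝ => (1 - t) ^ (-1 - α) * (1 + t) ^ (-1 - β)) volume (-1/2 : ℝ) 0 :=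
        jacobi_f_II α β (by norm_num) (by norm_num) le_rfl
      have hK : 0 < K := by
        rw [hKdef]
        refine intervalIntegral.intervalIntegral_pos_of_pos_on hfi ?_ (by norm_num)
        intro t ht
        obtain ⟨ht1, ht2⟩ := ht
        exact mul_pos (Real.rpow_pos_of_pos (by linarith) _)
          (Real.rpow_pos_of_pos (by linarith) _)
      set c := K ^ 2 * m' with hcdef
      have hc : 0 < c := mul_pos (pow_pos hK 2) hm'
      have h' := h.mono_set (Ioo_subset_Ioo le_rfl (by norm_num : (-1/2:ℝ) ≤ 0))
      have hGcont : ContinuousOn (fun x : ℝ => c * (1 + x) ^ β) (Ioo (-1:ℝ) (-1/2)) :=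
        continuousOn_const.mul (contOn_one_add β (fun t ht => by have := ht.1; linarith))
      have hG : IntegrableOn (fun x : ℝ => c * (1 + x) ^ β) (Ioo (-1:ℝ) (-1/2)) := by
        refine Integrable.mono' h' (hGcont.aestronglyMeasurable measurableSet_Ioo) ?_
        filter_upwards [ae_restrict_mem measurableSet_Ioo] with x hx
        obtain ⟨hx1, hx2⟩ := hx
        have hu : (0:ℝ) < 1 + x := by linarith
        have hKx : K ≤ ∫ t in x..0, (1 - t) ^ (-1 - α) * (1 + t) ^ (-1 - β) := by
          have hi1 := jacobi_f_II α β hx1 (by linarith : x ≤ -1/2) (by norm_num)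
          have hadd := intervalIntegral.integral_add_adjacent_intervals hi1 hfi
          have hpos1 : 0 ≤ ∫ t in x..(-1/2:ℝ), (1 - t) ^ (-1 - α) * (1 + t) ^ (-1 - β) :=
            jacobi_integral_nonneg α β hx1.le (by linarith) (by norm_num)
          rw [hKdef]
          linarith [hadd]
        have hGnn : 0 ≤ c * (1 + x) ^ β := mul_nonneg hc.le (Real.rpow_nonneg hu.le _)
        rw [Real.norm_eq_abs, abs_of_nonneg hGnn, intervalIntegral.integral_symm x 0, neg_sq]
        have hq : K ^ 2 ≤ (∫ t in x..0, (1 - t) ^ (-1 - α) * (1 + t) ^ (-1 - β)) ^ 2 :=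
          pow_le_pow_left₀ hK.le hKx 2
        have hr : m' * (1 + x) ^ β ≤ (1 - x) ^ α * (1 + x) ^ β :=
          mul_le_mul_of_nonneg_right (min_le_rpow α (1 - x) (by linarith) (by linarith))
            (Real.rpow_nonneg hu.le _)
        calc c * (1 + x) ^ β = K ^ 2 * (m' * (1 + x) ^ β) := by rw [hcdef]; ring
          _ ≤ (∫ t in x..0, (1 - t) ^ (-1 - α) * (1 + t) ^ (-1 - β)) ^ 2
              * ((1 - x) ^ α * (1 + x) ^ β) :=
            mul_le_mul hq hr (mul_nonneg hm'.le (Real.rpow_nonneg hu.le _)) (sq_nonneg _)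
      have h2 := hG.const_mul c⁻¹
      simp only [← mul_assoc, inv_mul_cancel₀ hc.ne', one_mul] at h2
      have := (integrableOn_one_add_rpow_iff β (-1/2) (by norm_num)).mp h2
      linarith
    · -- 1 ≤ β
      have h1β : 1 ≤ β := hβ hgt
      have hβ0 : (0:ℝ) < β := by linarith
      set x₀ := (2:ℝ) ^ (-1/β) - 1 with hx₀def
      have hp0 : (0:ℝ) < (2:ℝ) ^ (-1/β) := Real.rpow_pos_of_pos two_pos _
      have hp1 : (2:ℝ) ^ (-1/β) < 1 := by
        refine Real.rpow_lt_one_of_one_lt_of_neg one_lt_two ?_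
        rw [neg_div]
        exact neg_lt_zero.mpr (div_pos one_pos hβ0)
      have hx₀a : -1 < x₀ := by rw [hx₀def]; linarith
      have hx₀b : x₀ < 0 := by rw [hx₀def]; linarith
      set c := (m / (2 * β)) ^ 2 * m' with hcdef
      have hc : 0 < c := mul_pos (pow_pos (div_pos hm (by linarith)) 2) hm'
      have h' := h.mono_set (Ioo_subset_Ioo le_rfl hx₀b.le)
      have hGcont : ContinuousOn (fun x : ℝ => c * (1 + x) ^ (-β)) (Ioo (-1:ℝ) x₀) :=
        continuousOn_const.mul (contOn_one_add _ (fun t ht => by have := ht.1; linarith))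
      have hG : IntegrableOn (fun x : ℝ => c * (1 + x) ^ (-β)) (Ioo (-1:ℝ) x₀) := by
        refine Integrable.mono' h' (hGcont.aestronglyMeasurable measurableSet_Ioo) ?_
        filter_upwards [ae_restrict_mem measurableSet_Ioo] with x hx
        obtain ⟨hx1, hx2⟩ := hx
        have hu : (0:ℝ) < 1 + x := by linarith
        have hx0' : x ≤ 0 := by linarith
        have h2le : (2:ℝ) ≤ (1 + x) ^ (-β) := by
          have hxy : 1 + x ≤ (2:ℝ) ^ (-1/β) := by rw [hx₀def] at hx2; linarith
          have hmono := Real.rpow_le_rpow_of_nonpos hu hxy (by linarith : -β ≤ 0)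
          have heq : ((2:ℝ) ^ (-1/β)) ^ (-β) = 2 := by
            rw [← Real.rpow_mul (by norm_num : (0:ℝ) ≤ 2),
              show -1 / β * -β = 1 by field_simp, Real.rpow_one]
          linarith [heq ▸ hmono]
        have hKx : m / (2 * β) * (1 + x) ^ (-β)
            ≤ ∫ t in x..0, (1 - t) ^ (-1 - α) * (1 + t) ^ (-1 - β) := by
          refine le_trans ?_ (key_lower α β hβ0.ne' hx1 hx0')
          have hhalf : (1 + x) ^ (-β) / 2 ≤ (1 + x) ^ (-β) - 1 := by linarith
          calc m / (2 * β) * (1 + x) ^ (-β) = m * (((1 + x) ^ (-β) / 2) / β) := by ring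
            _ ≤ m * (((1 + x) ^ (-β) - 1) / β) := by gcongr
        have hGnn : 0 ≤ c * (1 + x) ^ (-β) := mul_nonneg hc.le (Real.rpow_nonneg hu.le _)
        rw [Real.norm_eq_abs, abs_of_nonneg hGnn, intervalIntegral.integral_symm x 0, neg_sq]
        have hq : (m / (2 * β) * (1 + x) ^ (-β)) ^ 2
            ≤ (∫ t in x..0, (1 - t) ^ (-1 - α) * (1 + t) ^ (-1 - β)) ^ 2 :=
          pow_le_pow_left₀
            (mul_nonneg (div_nonneg hm.le (by linarith)) (Real.rpow_nonneg hu.le _)) hKx 2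
        have hr : m' * (1 + x) ^ β ≤ (1 - x) ^ α * (1 + x) ^ β :=
          mul_le_mul_of_nonneg_right (min_le_rpow α (1 - x) (by linarith) (by linarith))
            (Real.rpow_nonneg hu.le _)
        have he : (1 + x) ^ (-β) * (1 + x) ^ (-β) * (1 + x) ^ β = (1 + x) ^ (-β) := by
          rw [← Real.rpow_add hu, ← Real.rpow_add hu]; congr 1; ring
        calc c * (1 + x) ^ (-β)
            = (m / (2 * β)) ^ 2 * m' * ((1 + x) ^ (-β) * (1 + x) ^ (-β) * (1 + x) ^ β) := by
              rw [he, hcdef]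
          _ = (m / (2 * β) * (1 + x) ^ (-β)) ^ 2 * (m' * (1 + x) ^ β) := by ring
          _ ≤ (∫ t in x..0, (1 - t) ^ (-1 - α) * (1 + t) ^ (-1 - β)) ^ 2
              * ((1 - x) ^ α * (1 + x) ^ β) :=
            mul_le_mul hq hr (mul_nonneg hm'.le (Real.rpow_nonneg hu.le _)) (sq_nonneg _)
      have h2 := hG.const_mul c⁻¹
      simp only [← mul_assoc, inv_mul_cancel₀ hc.ne', one_mul] at h2
      have := (integrableOn_one_add_rpow_iff (-β) x₀ hx₀a).mp h2
      linarith
  · rintro ⟨hβ1, hβ2⟩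
    set M := max 1 ((2:ℝ) ^ (-1 - α)) with hMdef
    have hM0 : (0:ℝ) < M := lt_of_lt_of_le one_pos (le_max_left _ _)
    set γ := max β 0 / 2 + (β + 1) / 4 with hγdef
    have hmax0 : 0 ≤ max β 0 := le_max_right _ _
    have hmaxβ : β ≤ max β 0 := le_max_left _ _
    have hγpos : 0 < γ := by rw [hγdef]; linarith
    have hβγ : β ≤ γ := by
      rcases le_total β 0 with hb | hb
      · rw [hγdef, max_eq_right hb]; linarith
      · rw [hγdef, max_eq_left hb]; linarith
    have hexp : -1 < β - 2 * γ := by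
      rcases le_total β 0 with hb | hb
      · rw [hγdef, max_eq_right hb]; linarith
      · rw [hγdef, max_eq_left hb]; linarith
    set C := (M / γ) ^ 2 * max 1 ((2:ℝ) ^ α) with hCdef
    have hint : IntegrableOn (fun x : ℝ => (1 + x) ^ (β - 2 * γ)) (Ioo (-1:ℝ) 0) :=
      (integrableOn_one_add_rpow_iff _ 0 (by norm_num)).mpr hexp
    have hFcont : ContinuousOn
        (fun x : ℝ => (∫ t in (0 : ℝ)..x, (1 - t) ^ (-1 - α) * (1 + t) ^ (-1 - β)) ^ 2
          * ((1 - x) ^ α * (1 + x) ^ β)) (Ioo (-1:ℝ) 0) :=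
      ((y2_contOn α β).pow 2).mul
        ((contOn_one_sub α (fun t ht => by have := ht.2; linarith)).mul
         (contOn_one_add β (fun t ht => by have := ht.1; linarith)))
    refine Integrable.mono' (hint.const_mul C)
      (hFcont.aestronglyMeasurable measurableSet_Ioo) ?_
    filter_upwards [ae_restrict_mem measurableSet_Ioo] with x hx
    obtain ⟨hx1, hx2⟩ := hx
    have hu : (0:ℝ) < 1 + x := by linarith
    set A := ∫ t in x..0, (1 - t) ^ (-1 - α) * (1 + t) ^ (-1 - β) with hAdef
    have hA0 : 0 ≤ A := jacobi_integral_nonneg α β (by linarith) hx2.le (by norm_num)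
    have hAub : A ≤ M / γ * (1 + x) ^ (-γ) := by
      refine (key_upper α β γ hγpos hβγ hx1 hx2.le).trans ?_
      have h1 : (1 + x) ^ (-γ) - 1 ≤ (1 + x) ^ (-γ) := by linarith
      calc M * (((1 + x) ^ (-γ) - 1) / γ) ≤ M * ((1 + x) ^ (-γ) / γ) := by gcongr
        _ = M / γ * (1 + x) ^ (-γ) := by ring
    have hy2 : (∫ t in (0:ℝ)..x, (1 - t) ^ (-1 - α) * (1 + t) ^ (-1 - β)) = -A := by
      rw [hAdef, ← intervalIntegral.integral_symm]
    have hFnn : (0:ℝ) ≤ (∫ t in (0:ℝ)..x, (1 - t) ^ (-1 - α) * (1 + t) ^ (-1 - β)) ^ 2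
        * ((1 - x) ^ α * (1 + x) ^ β) :=
      mul_nonneg (sq_nonneg _)
        (mul_nonneg (Real.rpow_nonneg (by linarith) _) (Real.rpow_nonneg hu.le _))
    rw [Real.norm_eq_abs, abs_of_nonneg hFnn, hy2, neg_sq]
    have hr : (1 - x) ^ α ≤ max 1 ((2:ℝ) ^ α) := rpow_le_max α (1 - x) (by linarith) (by linarith)
    have hstep : A ^ 2 * ((1 - x) ^ α * (1 + x) ^ β)
        ≤ (M / γ * (1 + x) ^ (-γ)) ^ 2 * (max 1 ((2:ℝ) ^ α) * (1 + x) ^ β) := by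
      have h1 : A ^ 2 ≤ (M / γ * (1 + x) ^ (-γ)) ^ 2 := by
        apply pow_le_pow_left₀ hA0 hAub
      have h2 : (1 - x) ^ α * (1 + x) ^ β ≤ max 1 ((2:ℝ) ^ α) * (1 + x) ^ β :=
        mul_le_mul_of_nonneg_right hr (Real.rpow_nonneg hu.le _)
      exact mul_le_mul h1 h2
        (mul_nonneg (Real.rpow_nonneg (by linarith) _) (Real.rpow_nonneg hu.le _))
        (sq_nonneg _)
    refine hstep.trans (le_of_eq ?_)
    have he : (1 + x) ^ (-γ) * (1 + x) ^ (-γ) * (1 + x) ^ β = (1 + x) ^ (β - 2 * γ) := by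
      rw [← Real.rpow_add hu, ← Real.rpow_add hu]; congr 1; ring
    calc (M / γ * (1 + x) ^ (-γ)) ^ 2 * (max 1 ((2:ℝ) ^ α) * (1 + x) ^ β)
        = C * ((1 + x) ^ (-γ) * (1 + x) ^ (-γ) * (1 + x) ^ β) := by rw [hCdef]; ring
      _ = C * (1 + x) ^ (β - 2 * γ) := by rw [he]
end

section
/- For n ∈ ℕ₀ and α, β ∈ ℝ, the Jacobi polynomial P_n^{α,β} satisfies the differential equation −(1−x)^{−α}(1+x)^{−β} d/dx[(1−x)^{α+1}(1+x)^{β+1} d/dx P_n^{α,β}(x)] = n(n+1+α+β) P_n^{α,β}(x) for x ∈ (−1,1). -/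
open Set

/-- The Jacobi polynomial
`P_n^{α,β}(x) = ((α+1)_n/n!) F(−n, n+α+β+1; α+1; (1−x)/2)`, written out as the finite sum
`∑_{k=0}^n (α+k+1)_{n−k} (n+α+β+1)_k / ((n−k)! k!) ((x−1)/2)^k` (which extends the
hypergeometric formula by continuity to all real parameters). -/
noncomputable def jacobiP (n : ℕ) (α β : ℝ) (x : ℝ) : ℝ :=
  ∑ k ∈ Finset.range (n + 1),
    ((ascPochhammer ℝ (n - k)).eval (α + k + 1)
        * (ascPochhammer ℝ k).eval ((n : ℝ) + α + β + 1))
      / ((n - k).factorial * k.factorial) * ((x - 1) / 2) ^ k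

/-!
In the variable `z = (1 - x) / 2` the Jacobi polynomial is a multiple of the terminating
hypergeometric series `F(-n, n+α+β+1; α+1; z)`, so its coefficients satisfy
`(j+1)(j+c) f_{j+1} = (j+a)(j+b) f_j` with `a = -n`, `b = n+α+β+1`, `c = α+1`, and comparing
coefficients shows that this recurrence is Gauss's equation `z(1-z)f'' + (c-(a+b+1)z)f' = ab f`.
Back in `x` this reads `(1-x²)P'' + (β-α-(α+β+2)x)P' = -n(n+α+β+1)P`, and multiplying by
`(1-x)^α(1+x)^β` turns the left-hand side into `((1-x)^(α+1)(1+x)^(β+1)P')'`.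
-/

open Polynomial

theorem Polynomial.hypergeometric_equation_of_coeff {R : Type*} [CommRing R] {p : R[X]}
    {a b c : R}
    (h : ∀ j : ℕ, (j + 1) * (j + c) * p.coeff (j + 1) = (j + a) * (j + b) * p.coeff j) :
    X * (1 - X) * derivative (derivative p) + (C c - C (a + b + 1) * X) * derivative p
      = C (a * b) * p := by
  ext j
  simp only [mul_sub, sub_mul, mul_one, mul_assoc, coeff_add, coeff_sub, coeff_C_mul]
  rcases j with _ | _ | j
  · simp only [coeff_X_mul_zero, coeff_derivative]
    linear_combination h 0
  · simp only [coeff_X_mul_zero, coeff_X_mul, coeff_derivative]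
    linear_combination h 1
  · have hj := h (j + 2)
    simp only [coeff_X_mul, coeff_derivative]
    push_cast at hj ⊢
    linear_combination hj

noncomputable def jacobiCoeff (n : ℕ) (α β : ℝ) (k : ℕ) : ℝ :=
  (ascPochhammer ℝ (n - k)).eval (α + k + 1) * (ascPochhammer ℝ k).eval ((n : ℝ) + α + β + 1)
    / ((n - k).factorial * k.factorial)

theorem jacobiCoeff_succ_mul {n k : ℕ} (α β : ℝ) (hk : k < n) :
    jacobiCoeff n α β (k + 1) * ((k + 1) * (k + α + 1))
      = jacobiCoeff n α β k * ((n - k) * (n + k + α + β + 1)) := by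
  obtain ⟨m, rfl⟩ := Nat.exists_eq_add_of_lt hk
  have hm : k + m + 1 - k = m + 1 := by omega
  have hm' : k + m + 1 - (k + 1) = m := by omega
  rw [jacobiCoeff, jacobiCoeff, hm, hm', ascPochhammer_succ_right (S := ℝ) (n := k),
    ascPochhammer_succ_left (S := ℝ) (n := m)]
  simp only [eval_mul, eval_comp, eval_add, eval_X, eval_one, eval_natCast, Nat.factorial_succ]
  push_cast
  rw [show α + (k + 1) + 1 = α + k + 1 + 1 by ring]
  field_simp
  ring

noncomputable def jacobiHypergeometricPoly (n : ℕ) (α β : ℝ) : ℝ[X] :=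
  ∑ k ∈ Finset.range (n + 1), C ((-1) ^ k * jacobiCoeff n α β k) * X ^ k

theorem coeff_jacobiHypergeometricPoly (n : ℕ) (α β : ℝ) (j : ℕ) :
    (jacobiHypergeometricPoly n α β).coeff j
      = if j ≤ n then (-1) ^ j * jacobiCoeff n α β j else 0 := by
  simp only [jacobiHypergeometricPoly, finsetSum_coeff, coeff_C_mul_X_pow, Finset.sum_ite_eq,
    Finset.mem_range, Nat.lt_succ_iff]

theorem jacobiHypergeometricPoly_coeff_succ (n : ℕ) (α β : ℝ) (j : ℕ) :
    (j + 1) * (j + (α + 1)) * (jacobiHypergeometricPoly n α β).coeff (j + 1)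
      = (j + -n) * (j + (n + α + β + 1)) * (jacobiHypergeometricPoly n α β).coeff j := by
  simp only [coeff_jacobiHypergeometricPoly]
  rcases lt_trichotomy j n with hj | rfl | hj
  · rw [if_pos (Nat.succ_le_of_lt hj), if_pos hj.le]
    linear_combination (-1) ^ (j + 1) * jacobiCoeff_succ_mul α β hj
  · simp
  · rw [if_neg (by omega), if_neg (by omega)]
    ring

theorem jacobiP_eq_eval (n : ℕ) (α β x : ℝ) :
    jacobiP n α β x = (jacobiHypergeometricPoly n α β).eval ((1 - x) / 2) := by
  simp only [jacobiP, jacobiHypergeometricPoly, eval_finsetSum, eval_mul, eval_C, eval_pow,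
    eval_X]
  refine Finset.sum_congr rfl fun k _ => ?_
  rw [jacobiCoeff, show (x - 1) / 2 = -1 * ((1 - x) / 2) by ring, mul_pow]
  ring

theorem hasDerivAt_eval_one_sub_div_two {𝕜 : Type*} [NontriviallyNormedField 𝕜] (p : 𝕜[X])
    (x : 𝕜) :
    HasDerivAt (fun y => p.eval ((1 - y) / 2)) (-(derivative p).eval ((1 - x) / 2) / 2) x := by
  have := (p.hasDerivAt ((1 - x) / 2)).comp x (((hasDerivAt_id x).const_sub 1).div_const 2)
  exact this.congr_deriv (by ring)

theorem hasDerivAt_one_sub_rpow_mul_one_add_rpow_mul {α β x : ℝ} (hx : x ∈ Ioo (-1 : ℝ) 1)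
    {g : ℝ → ℝ} {g' : ℝ} (hg : HasDerivAt g g' x) :
    HasDerivAt (fun y => (1 - y) ^ (α + 1) * (1 + y) ^ (β + 1) * g y)
      ((1 - x) ^ α * (1 + x) ^ β * ((1 - x) * (1 + x) * g' + (β - α - (α + β + 2) * x) * g x))
      x := by
  have h₁ : 0 < 1 - x := by linarith [hx.2]
  have h₂ : 0 < 1 + x := by linarith [hx.1]
  have hu := ((hasDerivAt_id x).const_sub 1).rpow_const (p := α + 1) (Or.inl h₁.ne')
  have hv := ((hasDerivAt_id x).const_add 1).rpow_const (p := β + 1) (Or.inl h₂.ne')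
  refine ((hu.mul hv).mul hg).congr_deriv ?_
  simp only [id, Pi.mul_apply, add_sub_cancel_right, Real.rpow_add_one h₁.ne',
    Real.rpow_add_one h₂.ne']
  ring

/-- For all `n ∈ ℕ₀` and `α, β ∈ ℝ`, the Jacobi polynomial `P_n^{α,β}` satisfies
`−[(1−x)^{α+1}(1+x)^{β+1}(P_n^{α,β})']' = n(n+1+α+β)(1−x)^α(1+x)^β P_n^{α,β}`
on `(−1,1)`. -/
theorem jacobiP_differential_equation (n : ℕ) (α β : ℝ) :
    ∀ x ∈ Ioo (-1 : ℝ) 1,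
      HasDerivAt
        (fun y : ℝ => (1 - y) ^ (α + 1) * (1 + y) ^ (β + 1) * deriv (jacobiP n α β) y)
        (-((n : ℝ) * ((n : ℝ) + 1 + α + β)) * ((1 - x) ^ α * (1 + x) ^ β)
          * jacobiP n α β x) x := by
  intro x hx
  set p := jacobiHypergeometricPoly n α β
  have hP' : deriv (jacobiP n α β) = fun y => -(derivative p).eval ((1 - y) / 2) / 2 := by
    funext y
    rw [funext (jacobiP_eq_eval n α β)]
    exact (hasDerivAt_eval_one_sub_div_two p y).deriv
  have hP'' : HasDerivAt (fun y => -(derivative p).eval ((1 - y) / 2) / 2)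
      ((derivative (derivative p)).eval ((1 - x) / 2) / 4) x :=
    ((hasDerivAt_eval_one_sub_div_two (derivative p) x).neg.div_const 2).congr_deriv (by ring)
  have hode := congrArg (eval ((1 - x) / 2))
    (p.hypergeometric_equation_of_coeff (jacobiHypergeometricPoly_coeff_succ n α β))
  simp only [eval_add, eval_mul, eval_sub, eval_X, eval_C, eval_one] at hode
  rw [hP']
  refine (hasDerivAt_one_sub_rpow_mul_one_add_rpow_mul hx hP'').congr_deriv ?_
  rw [jacobiP_eq_eval]
  linear_combination (1 - x) ^ α * (1 + x) ^ β * hode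
end
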